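/- Let n = p + q ≥ 3 and G = diag(a₁,…,aₙ) with a_i = 1 for i ≤ p and a_i = −1 for i > p. Then so(p,q)⁺, the space of traceless matrices self-adjoint with respect to G, is an irreducible so(p,q)-module under the commutator action S·A = SA − AS: every linear subspace of so(p,q)⁺ that is invariant under commutation with all elements of so(p,q) is either {0} or all of so(p,q)⁺. -/

import Mathlib

open Matrix

/-- The signs `a_i` of the flat metric of signature `(p,q)`. -/
def metricSign (p : ℕ) {n : ℕ} (i : Fin n) : ℝ := if (i : ℕ) < p then 1 else -1

/-- The diagonal matrix `G = diag(a₁, …, aₙ)`. -/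
noncomputable def Gmat (p : ℕ) (n : ℕ) : Matrix (Fin n) (Fin n) ℝ :=
  Matrix.diagonal (fun i => metricSign p i)

namespace SoPlus

variable {n : ℕ} (p : ℕ)

/-- `ε i j = a i * a j`. -/
def eps (i j : Fin n) : ℝ := metricSign p i * metricSign p j

lemma sign_sq (i : Fin n) : metricSign p i * metricSign p i = 1 := by
  unfold metricSign; split_ifs <;> norm_num

lemma eps_sq (i j : Fin n) : eps p i j * eps p i j = 1 := by
  unfold eps
  have hi := sign_sq p i; have hj := sign_sq p j
  nlinarith [hi, hj]

lemma eps_ne_zero (i j : Fin n) : eps p i j ≠ 0 := by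
  intro h
  have := eps_sq p i j
  rw [h] at this; norm_num at this

/-- basis elements of so(p,q)⁺ (off diagonal part). -/
def Bm (i j : Fin n) : Matrix (Fin n) (Fin n) ℝ :=
  Matrix.of fun k l => (if k = i ∧ l = j then 1 else 0) + eps p i j * (if k = j ∧ l = i then 1 else 0)

/-- basis elements of so(p,q). -/
def Sm (i j : Fin n) : Matrix (Fin n) (Fin n) ℝ :=
  Matrix.of fun k l => (if k = i ∧ l = j then 1 else 0) - eps p i j * (if k = j ∧ l = i then 1 else 0)

/-- diagonal elements `E_ii - E_jj` of so(p,q)⁺. -/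
def Hm (i j : Fin n) : Matrix (Fin n) (Fin n) ℝ :=
  Matrix.of fun k l => (if k = i ∧ l = i then 1 else 0) - (if k = j ∧ l = j then 1 else 0)

/-- the commutator action. -/
def Tact (S X : Matrix (Fin n) (Fin n) ℝ) : Matrix (Fin n) (Fin n) ℝ := S * X - X * S

lemma Tact_add (S X Y : Matrix (Fin n) (Fin n) ℝ) : Tact S (X + Y) = Tact S X + Tact S Y := by
  simp [Tact, mul_add, add_mul]; abel

lemma Tact_smul (S : Matrix (Fin n) (Fin n) ℝ) (c : ℝ) (X) : Tact S (c • X) = c • Tact S X := by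
  simp [Tact, mul_smul_comm, smul_mul_assoc, smul_sub]

/-- Master entry formula for the commutator with `Sm i j`. -/
lemma comm_apply {i j : Fin n} (hij : i ≠ j) (X : Matrix (Fin n) (Fin n) ℝ) (k l : Fin n) :
    (Tact (Sm p i j) X) k l =
      ((if k = i then X j l else 0) - eps p i j * (if k = j then X i l else 0))
      - ((if l = j then X k i else 0) - eps p i j * (if l = i then X k j else 0)) := by
  simp only [Tact, Matrix.sub_apply, Matrix.mul_apply, Sm, Matrix.of_apply]
  simp only [sub_mul, mul_sub, ite_mul, mul_ite, one_mul, zero_mul, mul_one, mul_zero]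
  rw [Finset.sum_sub_distrib, Finset.sum_sub_distrib]
  congr 1 <;> congr 1
  · rw [Finset.sum_eq_single j]
    · simp
    · intro b _ hb; simp [hb]
    · simp
  · rw [Finset.sum_eq_single i]
    · simp
    · intro b _ hb; simp [hb]
    · simp
  · rw [Finset.sum_eq_single i]
    · simp [hij.symm]
    · intro b _ hb; simp [hb]
    · simp
  · rw [Finset.sum_eq_single j]
    · simp [hij, mul_comm]
    · intro b _ hb; simp [hb]
    · simp

lemma sign_pm (i : Fin n) : metricSign p i = 1 ∨ metricSign p i = -1 := by
  unfold metricSign; split_ifs <;> simp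

lemma Smem {i j : Fin n} (hij : i ≠ j) :
    (Sm p i j)ᵀ * Gmat p n + Gmat p n * Sm p i j = 0 := by
  ext k l
  simp only [Gmat, Matrix.add_apply, Matrix.mul_diagonal, Matrix.diagonal_mul,
    Matrix.transpose_apply, Sm, Matrix.of_apply, Matrix.zero_apply]
  by_cases hki : k = i <;> by_cases hkj : k = j <;> by_cases hli : l = i <;>
    by_cases hlj : l = j
  all_goals try exact absurd (hki.symm.trans hkj) hij
  all_goals try exact absurd (hli.symm.trans hlj) hij
  all_goals rcases sign_pm p i with hsi | hsi <;> rcases sign_pm p j with hsj | hsj <;>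
    simp_all [eps, Ne.symm hij] <;> try ring1

lemma TB {i j : Fin n} (hij : i ≠ j) :
    Tact (Sm p i j) (Bm p i j) = (2 * eps p i j) • Hm (n := n) i j := by
  ext k l
  rw [comm_apply p hij]
  simp only [Bm, Hm, Matrix.of_apply, Matrix.smul_apply, smul_eq_mul]
  by_cases hki : k = i <;> by_cases hkj : k = j <;> by_cases hli : l = i <;>
    by_cases hlj : l = j
  all_goals try exact absurd (hki.symm.trans hkj) hij
  all_goals try exact absurd (hli.symm.trans hlj) hij
  all_goals rcases sign_pm p i with hsi | hsi <;> rcases sign_pm p j with hsj | hsj <;>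
    simp_all [eps, Ne.symm hij] <;> try ring1

lemma TH {i j : Fin n} (hij : i ≠ j) :
    Tact (Sm p i j) (Hm (n := n) i j) = (-2 : ℝ) • Bm p i j := by
  ext k l
  rw [comm_apply p hij]
  simp only [Bm, Hm, Matrix.of_apply, Matrix.smul_apply, smul_eq_mul]
  by_cases hki : k = i <;> by_cases hkj : k = j <;> by_cases hli : l = i <;>
    by_cases hlj : l = j
  all_goals try exact absurd (hki.symm.trans hkj) hij
  all_goals try exact absurd (hli.symm.trans hlj) hij
  all_goals rcases sign_pm p i with hsi | hsi <;> rcases sign_pm p j with hsj | hsj <;>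
    simp_all [eps, Ne.symm hij] <;> try ring1

lemma moveB {i j k : Fin n} (hij : i ≠ j) (hki : k ≠ i) (hkj : k ≠ j) :
    Tact (Sm p k i) (Bm p i j) = Bm p k j := by
  ext a b
  rw [comm_apply p hki]
  simp only [Bm, Matrix.of_apply]
  by_cases hai : a = i <;> by_cases haj : a = j <;> by_cases hak : a = k <;>
    by_cases hbi : b = i <;> by_cases hbj : b = j <;> by_cases hbk : b = k
  all_goals try exact absurd (hai.symm.trans haj) hij
  all_goals try exact absurd (hak.symm.trans hai) hki
  all_goals try exact absurd (hak.symm.trans haj) hkj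
  all_goals try exact absurd (hbi.symm.trans hbj) hij
  all_goals try exact absurd (hbk.symm.trans hbi) hki
  all_goals try exact absurd (hbk.symm.trans hbj) hkj
  all_goals rcases sign_pm p i with hsi | hsi <;> rcases sign_pm p j with hsj | hsj <;>
    rcases sign_pm p k with hsk | hsk <;>
      simp_all [eps, Ne.symm hij, Ne.symm hki, Ne.symm hkj, hki, hkj] <;> try ring1

lemma TSikB {i j k : Fin n} (hij : i ≠ j) (hki : k ≠ i) (hkj : k ≠ j) :
    Tact (Sm p i k) (Bm p i j) = (-(eps p i k)) • Bm p k j := by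
  ext a b
  rw [comm_apply p (Ne.symm hki)]
  simp only [Bm, Matrix.of_apply, Matrix.smul_apply, smul_eq_mul]
  by_cases hai : a = i <;> by_cases haj : a = j <;> by_cases hak : a = k <;>
    by_cases hbi : b = i <;> by_cases hbj : b = j <;> by_cases hbk : b = k
  all_goals try exact absurd (hai.symm.trans haj) hij
  all_goals try exact absurd (hak.symm.trans hai) hki
  all_goals try exact absurd (hak.symm.trans haj) hkj
  all_goals try exact absurd (hbi.symm.trans hbj) hij
  all_goals try exact absurd (hbk.symm.trans hbi) hki
  all_goals try exact absurd (hbk.symm.trans hbj) hkj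
  all_goals rcases sign_pm p i with hsi | hsi <;> rcases sign_pm p j with hsj | hsj <;>
    rcases sign_pm p k with hsk | hsk <;>
      simp_all [eps, Ne.symm hij, Ne.symm hki, Ne.symm hkj, hki, hkj] <;> try ring1

lemma TSikH {i j k : Fin n} (hij : i ≠ j) (hki : k ≠ i) (hkj : k ≠ j) :
    Tact (Sm p i k) (Hm (n := n) i j) = (-1 : ℝ) • Bm p i k := by
  ext a b
  rw [comm_apply p (Ne.symm hki)]
  simp only [Bm, Hm, Matrix.of_apply, Matrix.smul_apply, smul_eq_mul]
  by_cases hai : a = i <;> by_cases haj : a = j <;> by_cases hak : a = k <;>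
    by_cases hbi : b = i <;> by_cases hbj : b = j <;> by_cases hbk : b = k
  all_goals try exact absurd (hai.symm.trans haj) hij
  all_goals try exact absurd (hak.symm.trans hai) hki
  all_goals try exact absurd (hak.symm.trans haj) hkj
  all_goals try exact absurd (hbi.symm.trans hbj) hij
  all_goals try exact absurd (hbk.symm.trans hbi) hki
  all_goals try exact absurd (hbk.symm.trans hbj) hkj
  all_goals rcases sign_pm p i with hsi | hsi <;> rcases sign_pm p j with hsj | hsj <;>
    rcases sign_pm p k with hsk | hsk <;>
      simp_all [eps, Ne.symm hij, Ne.symm hki, Ne.symm hkj, hki, hkj] <;> try ring1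

lemma symmB {i j : Fin n} (hij : i ≠ j) : Bm p j i = eps p i j • Bm p i j := by
  ext k l
  simp only [Bm, Matrix.of_apply, Matrix.smul_apply, smul_eq_mul]
  by_cases hki : k = i <;> by_cases hkj : k = j <;> by_cases hli : l = i <;>
    by_cases hlj : l = j
  all_goals try exact absurd (hki.symm.trans hkj) hij
  all_goals try exact absurd (hli.symm.trans hlj) hij
  all_goals rcases sign_pm p i with hsi | hsi <;> rcases sign_pm p j with hsj | hsj <;>
    simp_all [eps, Ne.symm hij] <;> try ring1

lemma Hm_zero (i : Fin n) : Hm (n := n) i i = 0 := by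
  ext k l; simp [Hm]

lemma diagComm {i j : Fin n} (hij : i ≠ j) (A : Matrix (Fin n) (Fin n) ℝ)
    (hdiag : ∀ k l, k ≠ l → A k l = 0) :
    Tact (Sm p i j) A = (A j j - A i i) • Bm p i j := by
  ext k l
  rw [comm_apply p hij]
  simp only [Bm, Matrix.of_apply, Matrix.smul_apply, smul_eq_mul]
  by_cases hki : k = i <;> by_cases hkj : k = j <;> by_cases hli : l = i <;>
    by_cases hlj : l = j
  all_goals try exact absurd (hki.symm.trans hkj) hij
  all_goals try exact absurd (hli.symm.trans hlj) hij
  all_goals rcases sign_pm p i with hsi | hsi <;> rcases sign_pm p j with hsj | hsj <;>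
    simp_all [eps, hdiag, Ne.symm hij]
  all_goals first
    | ring1
    | exact hdiag _ _ (Ne.symm hlj)
    | exact hdiag _ _ (Ne.symm hli)
    | exact hdiag _ _ hkj
    | exact hdiag _ _ hki

def maskM (i j : Fin n) (R : Matrix (Fin n) (Fin n) ℝ) : Matrix (Fin n) (Fin n) ℝ :=
  Matrix.of fun k l =>
    if ((k = i ∨ k = j) ∧ ¬(l = i ∨ l = j)) ∨ (¬(k = i ∨ k = j) ∧ (l = i ∨ l = j)) then R k l
    else 0

lemma Tsq_red {i j : Fin n} (hij : i ≠ j) (R : Matrix (Fin n) (Fin n) ℝ)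
    (hRij : R i j = 0) (hRji : R j i = 0) (hRd : R i i = R j j) :
    Tact (Sm p i j) (Tact (Sm p i j) R) = (-(eps p i j)) • maskM i j R := by
  ext k l
  rw [comm_apply p hij]
  simp only [comm_apply p hij R, maskM, Matrix.of_apply, Matrix.smul_apply, smul_eq_mul]
  by_cases hki : k = i <;> by_cases hkj : k = j <;> by_cases hli : l = i <;>
    by_cases hlj : l = j
  all_goals try exact absurd (hki.symm.trans hkj) hij
  all_goals try exact absurd (hli.symm.trans hlj) hij
  all_goals rcases sign_pm p i with hsi | hsi <;> rcases sign_pm p j with hsj | hsj <;>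
    simp_all [eps, Ne.symm hij] <;> try ring1

lemma eps_pm (i j : Fin n) : eps p i j = 1 ∨ eps p i j = -1 := by
  rcases sign_pm p i with h1 | h1 <;> rcases sign_pm p j with h2 | h2 <;>
    simp [eps, h1, h2]

lemma mask_ij {i j : Fin n} (R : Matrix (Fin n) (Fin n) ℝ) : (maskM i j R) i j = 0 := by
  simp [maskM]

lemma mask_ji {i j : Fin n} (R : Matrix (Fin n) (Fin n) ℝ) : (maskM i j R) j i = 0 := by
  simp [maskM]

lemma mask_ii {i j : Fin n} (R : Matrix (Fin n) (Fin n) ℝ) :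
    (maskM i j R) i i = (maskM i j R) j j := by
  simp [maskM]

lemma mask_idem {i j : Fin n} (R : Matrix (Fin n) (Fin n) ℝ) :
    maskM i j (maskM i j R) = maskM i j R := by
  ext k l
  simp only [maskM, Matrix.of_apply]
  split_ifs with h <;> simp [h]

lemma proj_decomp {i j : Fin n} (hij : i ≠ j) (a b : ℝ) (R : Matrix (Fin n) (Fin n) ℝ)
    (hRij : R i j = 0) (hRji : R j i = 0) (hRd : R i i = R j j) :
    (fun X => Tact (Sm p i j) X)^[4] (a • Bm p i j + b • Hm (n := n) i j + R)
        + eps p i j • (fun X => Tact (Sm p i j) X)^[2] (a • Bm p i j + b • Hm (n := n) i j + R)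
      = (12 * a) • Bm p i j + (12 * b) • Hm (n := n) i j := by
  have e1 := Tsq_red p hij R hRij hRji hRd
  have e2 := Tsq_red p hij (maskM i j R) (mask_ij R) (mask_ji R) (mask_ii R)
  rw [mask_idem] at e2
  simp only [Function.iterate_succ, Function.iterate_zero, Function.comp_apply, id_eq]
  simp only [Tact_add, Tact_smul, TB p hij, TH p hij, e1, e2, Tact_smul, smul_add, smul_smul]
  rcases eps_pm p i j with hE | hE <;> simp only [hE] <;> module

lemma sym_of_mem {A : Matrix (Fin n) (Fin n) ℝ} (h : Aᵀ * Gmat p n = Gmat p n * A) :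
    ∀ k l, A l k = eps p k l * A k l := by
  intro k l
  have h1 : (Aᵀ * Gmat p n) l k = (Gmat p n * A) l k := by rw [h]
  simp only [Gmat, Matrix.mul_diagonal, Matrix.diagonal_mul, Matrix.transpose_apply] at h1
  rcases sign_pm p k with h2 | h2 <;> rcases sign_pm p l with h3 | h3 <;>
    simp only [eps, h2, h3] at * <;> linarith

-- entry lemmas
lemma Bm_ij {i j : Fin n} (hij : i ≠ j) : Bm p i j i j = 1 := by
  simp [Bm, hij, Ne.symm hij]

lemma Bm_ji {i j : Fin n} (hij : i ≠ j) : Bm p i j j i = eps p i j := by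
  simp [Bm, hij, Ne.symm hij]

lemma Bm_ii {i j : Fin n} (hij : i ≠ j) : Bm p i j i i = 0 := by
  simp [Bm, hij, Ne.symm hij]

lemma Bm_jj {i j : Fin n} (hij : i ≠ j) : Bm p i j j j = 0 := by
  simp [Bm, hij, Ne.symm hij]

lemma Hm_ij {i j : Fin n} (hij : i ≠ j) : Hm (n := n) i j i j = 0 := by
  simp [Hm, hij, Ne.symm hij]

lemma Hm_ji {i j : Fin n} (hij : i ≠ j) : Hm (n := n) i j j i = 0 := by
  simp [Hm, hij, Ne.symm hij]

lemma Hm_ii {i j : Fin n} (hij : i ≠ j) : Hm (n := n) i j i i = 1 := by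
  simp [Hm, hij, Ne.symm hij]

lemma Hm_jj {i j : Fin n} (hij : i ≠ j) : Hm (n := n) i j j j = -1 := by
  simp [Hm, hij, Ne.symm hij]

/-- plain (non-iterate) projection formula. -/
lemma proj {i j : Fin n} (hij : i ≠ j) (A : Matrix (Fin n) (Fin n) ℝ)
    (hsym : ∀ k l, A l k = eps p k l * A k l) :
    (fun X => Tact (Sm p i j) X)^[4] A + eps p i j • (fun X => Tact (Sm p i j) X)^[2] A
      = (12 * A i j) • Bm p i j + (12 * ((A i i - A j j)/2)) • Hm (n := n) i j := by
  set R := A - (A i j) • Bm p i j - ((A i i - A j j)/2) • Hm (n := n) i j with hR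
  have hA : (A i j) • Bm p i j + ((A i i - A j j)/2) • Hm (n := n) i j + R = A := by
    rw [hR]; abel
  have hRij : R i j = 0 := by
    simp only [hR, Matrix.sub_apply, Matrix.smul_apply, smul_eq_mul,
      Bm_ij p hij, Hm_ij hij]
    ring
  have hRji : R j i = 0 := by
    simp only [hR, Matrix.sub_apply, Matrix.smul_apply, smul_eq_mul,
      Bm_ji p hij, Hm_ji hij]
    rw [hsym i j]
    have := eps_sq p i j
    have hc : eps p j i = eps p i j := mul_comm _ _
    nlinarith [this, hc]
  have hRd : R i i = R j j := by
    simp only [hR, Matrix.sub_apply, Matrix.smul_apply, smul_eq_mul,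
      Bm_ii p hij, Bm_jj p hij, Hm_ii hij, Hm_jj hij]
    ring
  conv_lhs => rw [← hA]
  exact proj_decomp p hij _ _ R hRij hRji hRd

section Wlemmas

variable (W : Submodule ℝ (Matrix (Fin n) (Fin n) ℝ))
variable (hW2 : ∀ S : Matrix (Fin n) (Fin n) ℝ, Sᵀ * Gmat p n + Gmat p n * S = 0 →
  ∀ A ∈ W, S * A - A * S ∈ W)

include hW2

lemma Tmem {i j : Fin n} (hij : i ≠ j) {A : Matrix (Fin n) (Fin n) ℝ} (hA : A ∈ W) :
    Tact (Sm p i j) A ∈ W := hW2 _ (Smem p hij) A hA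

lemma Titer_mem {i j : Fin n} (hij : i ≠ j) {A : Matrix (Fin n) (Fin n) ℝ} (hA : A ∈ W)
    (m : ℕ) : (fun X => Tact (Sm p i j) X)^[m] A ∈ W := by
  induction m generalizing A with
  | zero => simpa using hA
  | succ m ih =>
      rw [Function.iterate_succ_apply]
      exact ih (Tmem p W hW2 hij hA)

/-- the projected vector is in `W`. -/
lemma projW {i j : Fin n} (hij : i ≠ j) {A : Matrix (Fin n) (Fin n) ℝ} (hA : A ∈ W)
    (hsym : ∀ k l, A l k = eps p k l * A k l) :
    (A i j) • Bm p i j + ((A i i - A j j)/2) • Hm (n := n) i j ∈ W := by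
  have hmem : (fun X => Tact (Sm p i j) X)^[4] A
      + eps p i j • (fun X => Tact (Sm p i j) X)^[2] A ∈ W :=
    W.add_mem (Titer_mem p W hW2 hij hA 4) (W.smul_mem _ (Titer_mem p W hW2 hij hA 2))
  rw [proj p hij A hsym] at hmem
  have h12 : (A i j) • Bm p i j + ((A i i - A j j)/2) • Hm (n := n) i j
      = (12 : ℝ)⁻¹ • ((12 * A i j) • Bm p i j + (12 * ((A i i - A j j)/2)) • Hm (n := n) i j) := by
    match_scalars <;> ring
  rw [h12]
  exact W.smul_mem _ hmem

lemma HfromB {i j : Fin n} (hij : i ≠ j) (hB : Bm p i j ∈ W) : Hm (n := n) i j ∈ W := by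
  have h := Tmem p W hW2 hij hB
  rw [TB p hij] at h
  have h2 : Hm (n := n) i j = (2 * eps p i j)⁻¹ • ((2 * eps p i j) • Hm (n := n) i j) := by
    rw [smul_smul, inv_mul_cancel₀ (by have := eps_ne_zero p i j; intro hc; apply this; linarith [mul_eq_zero.mp hc]), one_smul]
  rw [h2]
  exact W.smul_mem _ h

lemma smulB_mem {i j : Fin n} {c : ℝ} (hc : c ≠ 0) (hB : c • Bm p i j ∈ W) : Bm p i j ∈ W := by
  have : Bm p i j = c⁻¹ • (c • Bm p i j) := by rw [smul_smul, inv_mul_cancel₀ hc, one_smul]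
  rw [this]; exact W.smul_mem _ hB

lemma Bmem_of_v {i j : Fin n} (hij : i ≠ j) (a b : ℝ)
    (hdet : 2 * eps p i j * a ^ 2 + 2 * b ^ 2 ≠ 0)
    (hv : a • Bm p i j + b • Hm (n := n) i j ∈ W) : Bm p i j ∈ W := by
  have hTv := Tmem p W hW2 hij hv
  have hTveq : Tact (Sm p i j) (a • Bm p i j + b • Hm (n := n) i j)
      = (-2 * b) • Bm p i j + (2 * eps p i j * a) • Hm (n := n) i j := by
    rw [Tact_add, Tact_smul, Tact_smul, TB p hij, TH p hij]
    module
  rw [hTveq] at hTv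
  have hId : Bm p i j = (2 * eps p i j * a ^ 2 + 2 * b ^ 2)⁻¹ •
      ((2 * eps p i j * a) • (a • Bm p i j + b • Hm (n := n) i j)
        - b • ((-2 * b) • Bm p i j + (2 * eps p i j * a) • Hm (n := n) i j)) := by
    have hdet' : eps p i j * a ^ 2 + b ^ 2 ≠ 0 := by
      intro h; apply hdet; linear_combination 2 * h
    match_scalars
    all_goals field_simp
    all_goals try ring
  rw [hId]
  exact W.smul_mem _ (W.sub_mem (W.smul_mem _ hv) (W.smul_mem _ hTv))

lemma moveBW {i j k : Fin n} (hij : i ≠ j) (hki : k ≠ i) (hkj : k ≠ j)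
    (hB : Bm p i j ∈ W) : Bm p k j ∈ W := by
  have h := Tmem p W hW2 hki hB
  rwa [moveB p hij hki hkj] at h

lemma symmBW {i j : Fin n} (hij : i ≠ j) (hB : Bm p i j ∈ W) : Bm p j i ∈ W := by
  rw [symmB p hij]
  exact W.smul_mem _ hB

lemma allB {i0 j0 : Fin n} (h00 : i0 ≠ j0) (hB : Bm p i0 j0 ∈ W) :
    ∀ k l : Fin n, k ≠ l → Bm p k l ∈ W := by
  have h1 : ∀ m, m ≠ j0 → Bm p m j0 ∈ W := by
    intro m hm
    by_cases hmi : m = i0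
    · subst hmi; exact hB
    · exact moveBW p W hW2 h00 hmi hm hB
  have hji : Bm p j0 i0 ∈ W := symmBW p W hW2 h00 hB
  have h2 : ∀ m, m ≠ i0 → Bm p m i0 ∈ W := by
    intro m hm
    by_cases hmj : m = j0
    · subst hmj; exact hji
    · exact moveBW p W hW2 (Ne.symm h00) hmj hm hji
  intro k l hkl
  by_cases hl1 : l = j0
  · subst hl1; exact h1 k hkl
  by_cases hl2 : l = i0
  · subst hl2; exact h2 k hkl
  have hBjl : Bm p j0 l ∈ W := symmBW p W hW2 hl1 (h1 l hl1)
  by_cases hk1 : k = j0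
  · subst hk1; exact hBjl
  · exact moveBW p W hW2 (Ne.symm hl1) hk1 hkl hBjl

variable (hW1 : ∀ A ∈ W, Aᵀ * Gmat p n = Gmat p n * A ∧ A.trace = 0)

include hW1

lemma Bdegen {i j k : Fin n} (hij : i ≠ j) (hki : k ≠ i) (hkj : k ≠ j) (a b : ℝ) (ha : a ≠ 0)
    (hv : a • Bm p i j + b • Hm (n := n) i j ∈ W) : Bm p k j ∈ W := by
  have hwW : Tact (Sm p i k) (a • Bm p i j + b • Hm (n := n) i j) ∈ W :=
    hW2 _ (Smem p (Ne.symm hki)) _ hv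
  have hweq : Tact (Sm p i k) (a • Bm p i j + b • Hm (n := n) i j)
      = (-(a * eps p i k)) • Bm p k j + (-b) • Bm p i k := by
    rw [Tact_add, Tact_smul, Tact_smul, TSikB p hij hki hkj, TSikH p hij hki hkj]
    module
  rw [hweq] at hwW
  set w := (-(a * eps p i k)) • Bm p k j + (-b) • Bm p i k with hwdef
  have hwsym := sym_of_mem p (hW1 w hwW).1
  have hp := projW p W hW2 hkj hwW hwsym
  have e1 : w k j = -(a * eps p i k) := by
    rw [hwdef]
    simp [Matrix.add_apply, Matrix.smul_apply, Bm, hij, hki, hkj,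
      Ne.symm hij, Ne.symm hki, Ne.symm hkj]
  have e2 : w k k = 0 := by
    rw [hwdef]
    simp [Matrix.add_apply, Matrix.smul_apply, Bm, hij, hki, hkj,
      Ne.symm hij, Ne.symm hki, Ne.symm hkj]
  have e3 : w j j = 0 := by
    rw [hwdef]
    simp [Matrix.add_apply, Matrix.smul_apply, Bm, hij, hki, hkj,
      Ne.symm hij, Ne.symm hki, Ne.symm hkj]
  rw [e1, e2, e3] at hp
  have hz : ((0:ℝ) - 0)/2 = 0 := by norm_num
  rw [hz, zero_smul, add_zero] at hp
  exact smulB_mem p W hW2 (neg_ne_zero.mpr (mul_ne_zero ha (eps_ne_zero p i k))) hp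

lemma stage1 (h3 : 3 ≤ n) {A0 : Matrix (Fin n) (Fin n) ℝ}
    (hA0W : A0 ∈ W) (hA0 : A0 ≠ 0) : ∃ i j : Fin n, i ≠ j ∧ Bm p i j ∈ W := by
  have hsym0 := sym_of_mem p (hW1 A0 hA0W).1
  by_cases hoff : ∃ i j : Fin n, i ≠ j ∧ A0 i j ≠ 0
  · obtain ⟨i, j, hij, ha⟩ := hoff
    have hv : (A0 i j) • Bm p i j + ((A0 i i - A0 j j)/2) • Hm (n := n) i j ∈ W :=
      projW p W hW2 hij hA0W hsym0
    by_cases hdet : 2 * eps p i j * (A0 i j)^2 + 2 * ((A0 i i - A0 j j)/2)^2 = 0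
    · obtain ⟨k, hki, hkj⟩ : ∃ k : Fin n, k ≠ i ∧ k ≠ j := by
        by_contra h
        push_neg at h
        have hsub : (Finset.univ : Finset (Fin n)) ⊆ {i, j} := by
          intro k _
          rcases eq_or_ne k i with h1 | h1
          · simp [h1]
          · simp [h k h1]
        have hcard := Finset.card_le_card hsub
        have h2 : ({i, j} : Finset (Fin n)).card ≤ 2 := Finset.card_insert_le _ _ |>.trans (by simp)
        simp [Finset.card_univ] at hcard
        omega
      exact ⟨k, j, hkj, Bdegen p W hW2 hW1 hij hki hkj _ _ ha hv⟩
    · exact ⟨i, j, hij, Bmem_of_v p W hW2 hij _ _ hdet hv⟩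
  · push_neg at hoff
    have hdiag : ∀ k l : Fin n, k ≠ l → A0 k l = 0 := fun k l h => hoff k l h
    have hex : ∃ i j : Fin n, A0 i i ≠ A0 j j := by
      by_contra hcon
      push_neg at hcon
      apply hA0
      have htr := (hW1 A0 hA0W).2
      have h0 : (0:ℕ) < n := by omega
      have hc : ∀ k : Fin n, A0 k k = A0 ⟨0, h0⟩ ⟨0, h0⟩ := fun k => hcon k _
      have htr2 : A0.trace = (n : ℝ) * A0 ⟨0, h0⟩ ⟨0, h0⟩ := by
        simp only [Matrix.trace, Matrix.diag_apply]
        rw [Finset.sum_congr rfl (fun k _ => hc k)]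
        simp [Finset.card_univ, mul_comm]
      have hn0 : (n : ℝ) ≠ 0 := by positivity
      have hc0 : A0 ⟨0, h0⟩ ⟨0, h0⟩ = 0 := by
        rw [htr2] at htr
        exact (mul_eq_zero.mp htr).resolve_left hn0
      ext k l
      by_cases hkl : k = l
      · subst hkl; rw [hc k, hc0]; rfl
      · rw [hdiag k l hkl]; rfl
    obtain ⟨i, j, hne⟩ := hex
    have hij : i ≠ j := fun h => hne (by rw [h])
    have hTA := Tmem p W hW2 hij hA0W
    rw [diagComm p hij A0 hdiag] at hTA
    exact ⟨i, j, hij, smulB_mem p W hW2 (c := A0 j j - A0 i i)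
      (sub_ne_zero.mpr (Ne.symm hne)) hTA⟩

lemma span_final {i0 j0 : Fin n} (h00 : i0 ≠ j0) (hB00 : Bm p i0 j0 ∈ W) :
    ∀ A : Matrix (Fin n) (Fin n) ℝ, Aᵀ * Gmat p n = Gmat p n * A → A.trace = 0 → A ∈ W := by
  intro A hsA htA
  have hsym := sym_of_mem p hsA
  have hBall := allB p W hW2 h00 hB00
  have hHall : ∀ k l : Fin n, k ≠ l → Hm (n := n) k l ∈ W :=
    fun k l h => HfromB p W hW2 h (hBall k l h)
  have htr : ∑ k : Fin n, A k k = 0 := by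
    simpa [Matrix.trace, Matrix.diag_apply] using htA
  have hid : A = (2⁻¹ : ℝ) • (∑ k : Fin n, ∑ l : Fin n, if k ≠ l then A k l • Bm p k l else 0)
      + ∑ k : Fin n, A k k • Hm (n := n) k j0 := by
    ext k l
    simp only [Matrix.add_apply, Matrix.smul_apply, Matrix.sum_apply, smul_eq_mul]
    have split : ∀ k' l' : Fin n, (if k' ≠ l' then A k' l' • Bm p k' l' else 0) k l
        = (if k' ≠ l' then A k' l' * (if k = k' ∧ l = l' then 1 else 0) else 0)
          + (if k' ≠ l' then A k' l' * (eps p k' l' * (if k = l' ∧ l = k' then 1 else 0)) else 0) := by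
      intro k' l'
      rw [apply_ite (fun M : Matrix (Fin n) (Fin n) ℝ => M k l)]
      simp only [Matrix.smul_apply, Matrix.zero_apply, smul_eq_mul, Bm, Matrix.of_apply]
      split_ifs <;> ring
    have hS1 : ∑ k' : Fin n, ∑ l' : Fin n,
        (if k' ≠ l' then A k' l' * (if k = k' ∧ l = l' then 1 else 0) else 0)
        = if k ≠ l then A k l else 0 := by
      rw [Finset.sum_eq_single k]
      · rw [Finset.sum_eq_single l]
        · by_cases h : k = l <;> simp [h]
        · intro b _ hb; simp [Ne.symm hb]
        · intro h; simp at h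
      · intro b _ hb
        apply Finset.sum_eq_zero
        intro c _
        simp [Ne.symm hb]
      · intro h; simp at h
    have hS2 : ∑ k' : Fin n, ∑ l' : Fin n,
        (if k' ≠ l' then A k' l' * (eps p k' l' * (if k = l' ∧ l = k' then 1 else 0)) else 0)
        = if k ≠ l then A k l else 0 := by
      rw [Finset.sum_eq_single l]
      · rw [Finset.sum_eq_single k]
        · by_cases h : k = l
          · simp [h]
          · rw [if_pos (show (k = k ∧ l = l) from ⟨rfl, rfl⟩), if_pos (Ne.symm h),
              if_pos h, mul_one]
            have hcomm : eps p l k = eps p k l := mul_comm _ _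
            rw [hsym k l, hcomm]
            linear_combination (A k l) * eps_sq p k l
        · intro b _ hb; simp [Ne.symm hb]
        · intro h; simp at h
      · intro b _ hb
        apply Finset.sum_eq_zero
        intro c _
        simp [Ne.symm hb]
      · intro h; simp at h
    have hS3 : ∑ k' : Fin n, A k' k' * (Hm (n := n) k' j0) k l
        = if k = l then A k k else 0 := by
      have hterm : ∀ k' : Fin n, A k' k' * (Hm (n := n) k' j0) k l
          = (if k = k' ∧ l = k' then A k' k' else 0)
            - (if k = j0 ∧ l = j0 then A k' k' else 0) := by
        intro k'
        simp only [Hm, Matrix.of_apply]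
        split_ifs <;> ring
      rw [Finset.sum_congr rfl fun k' _ => hterm k', Finset.sum_sub_distrib]
      have h1 : ∑ k' : Fin n, (if k = k' ∧ l = k' then A k' k' else 0)
          = if k = l then A k k else 0 := by
        rw [Finset.sum_eq_single k]
        · by_cases h : k = l
          · simp [← h]
          · simp [h, Ne.symm h, fun hh : l = k => h hh.symm]
        · intro b _ hb; simp [Ne.symm hb]
        · intro h; simp at h
      have h2 : ∑ k' : Fin n, (if k = j0 ∧ l = j0 then A k' k' else 0) = 0 := by
        by_cases hc : k = j0 ∧ l = j0
        · simp only [if_pos hc]; exact htr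
        · simp [hc]
      rw [h1, h2, sub_zero]
    rw [Finset.sum_congr rfl fun k' (_ : k' ∈ Finset.univ) =>
      Finset.sum_congr rfl fun l' (_ : l' ∈ Finset.univ) => split k' l']
    simp only [Finset.sum_add_distrib]
    rw [hS1, hS2, hS3]
    by_cases h : k = l <;> simp [h] <;> ring
  rw [hid]
  refine W.add_mem (W.smul_mem _ (Submodule.sum_mem _ fun k _ =>
      Submodule.sum_mem _ fun l _ => ?_)) (Submodule.sum_mem _ fun k _ => ?_)
  · split_ifs with h
    · exact W.smul_mem _ (hBall k l h)
    · exact W.zero_mem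
  · by_cases h : k = j0
    · subst h; rw [Hm_zero, smul_zero]; exact W.zero_mem
    · exact W.smul_mem _ (hHall k j0 h)

end Wlemmas

end SoPlus

/-- For `n = p + q ≥ 3`, the space `so(p,q)⁺` of traceless `G`-self-adjoint matrices
is an irreducible `so(p,q)`-module under the commutator action: any subspace of
`so(p,q)⁺` invariant under commutation with all of `so(p,q)` is `{0}` or all of
`so(p,q)⁺`. -/
theorem soPlus_irreducible (p q n : ℕ) (hn : n = p + q) (h3 : 3 ≤ n) :
    ∀ W : Submodule ℝ (Matrix (Fin n) (Fin n) ℝ),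
      (∀ A ∈ W, Aᵀ * Gmat p n = Gmat p n * A ∧ A.trace = 0) →
      (∀ S : Matrix (Fin n) (Fin n) ℝ, Sᵀ * Gmat p n + Gmat p n * S = 0 →
        ∀ A ∈ W, S * A - A * S ∈ W) →
      W = ⊥ ∨
        (∀ A : Matrix (Fin n) (Fin n) ℝ,
          Aᵀ * Gmat p n = Gmat p n * A → A.trace = 0 → A ∈ W) := by
  intro W hW1 hW2
  by_cases hbot : W = ⊥
  · exact Or.inl hbot
  · right
    obtain ⟨A0, hA0W, hA0⟩ := (Submodule.ne_bot_iff W).mp hbot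
    obtain ⟨i1, j1, h11, hB⟩ := SoPlus.stage1 p W hW2 hW1 h3 hA0W hA0
    exact SoPlus.span_final p W hW2 hW1 h11 hB
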